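/- For a density matrix ρ (positive semidefinite, trace 1) and a Hermitian unitary P (P² = I), the Frobenius norm of the commutator satisfies ‖ρP − Pρ‖₂ ≤ √2. -/

import Mathlib

open Matrix ComplexOrder

/-- Frobenius norm of a complex square matrix: `‖A‖₂ = √(Tr(AᴴA))`. -/
noncomputable def frobNormC {n : Type*} [Fintype n] (A : Matrix n n ℂ) : ℝ :=
  Real.sqrt ((Aᴴ * A).trace.re)

lemma trace_cT_mul_self_re_nonneg {m : ℕ} (B : Matrix (Fin m) (Fin m) ℂ) :
    0 ≤ ((Bᴴ * B).trace).re := by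
  have : (Bᴴ * B).trace = ∑ j, ∑ i, (starRingEnd ℂ) (B i j) * B i j := by
    simp [Matrix.trace, Matrix.diag, Matrix.mul_apply, Matrix.conjTranspose_apply]
  rw [this]
  rw [Complex.re_sum]
  refine Finset.sum_nonneg fun j _ => ?_
  rw [Complex.re_sum]
  refine Finset.sum_nonneg fun i _ => ?_
  simp only [Complex.mul_re, Complex.conj_re, Complex.conj_im]
  nlinarith [sq_nonneg (B i j).re, sq_nonneg (B i j).im]

/-- For a density matrix ρ and a Hermitian unitary P (P² = I), the Frobenius norm
of the commutator satisfies ‖ρP − Pρ‖₂ ≤ √2. -/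
theorem commutator_frobenius_le_sqrt_two {n : ℕ}
    (ρ P : Matrix (Fin n) (Fin n) ℂ)
    (hρ : ρ.PosSemidef) (hρtr : ρ.trace = 1)
    (hP : P.IsHermitian) (hP2 : P * P = 1) :
    frobNormC (ρ * P - P * ρ) ≤ Real.sqrt 2 := by
  have hρh : ρᴴ = ρ := hρ.1
  have hPh : Pᴴ = P := hP
  -- conjugate transpose of the commutator
  have hCH : (ρ * P - P * ρ)ᴴ = P * ρ - ρ * P := by
    simp [Matrix.conjTranspose_sub, Matrix.conjTranspose_mul, hρh, hPh]
  -- trace identity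
  have hT1 : ((P * ρ) * (ρ * P)).trace = (ρ * ρ).trace := by
    rw [Matrix.trace_mul_comm]
    congr 1
    rw [mul_assoc, ← mul_assoc P P ρ, hP2, one_mul]
  have hT4 : ((ρ * P) * (P * ρ)).trace = (ρ * ρ).trace := by
    congr 1
    rw [mul_assoc, ← mul_assoc P P ρ, hP2, one_mul]
  have hT23 : ((P * ρ) * (P * ρ)).trace = ((ρ * P) * (ρ * P)).trace := by
    rw [show (P * ρ) * (P * ρ) = P * (ρ * P * ρ) by noncomm_ring, Matrix.trace_mul_comm]
    congr 1
    noncomm_ring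
  have key : (((ρ * P - P * ρ)ᴴ) * (ρ * P - P * ρ)).trace
      = 2 * (ρ * ρ).trace - 2 * ((ρ * P) * (ρ * P)).trace := by
    rw [hCH, sub_mul, mul_sub, mul_sub]
    rw [Matrix.trace_sub, Matrix.trace_sub, Matrix.trace_sub]
    rw [hT1, hT4, hT23]
    ring
  -- the cross term is nonnegative
  obtain ⟨S, hSh, hSS⟩ : ∃ S : Matrix (Fin n) (Fin n) ℂ, Sᴴ = S ∧ S * S = ρ :=
    by
      classical
      open scoped MatrixOrder in
      obtain ⟨X, hX, -, hXX⟩ :=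
        CFC.exists_sqrt_of_isSelfAdjoint_of_quasispectrumRestricts hρ.isHermitian
          (QuasispectrumRestricts.nnreal_of_nonneg hρ.nonneg)
      exact ⟨X, hX.star_eq, by simpa using hXX⟩
  have hcross : 0 ≤ (((ρ * P) * (ρ * P)).trace).re := by
    have h1 : (ρ * P) * (ρ * P) = S * ((S * P * S) * (S * P)) := by
      rw [← hSS]; noncomm_ring
    have h2 : (((ρ * P) * (ρ * P)).trace) = ((S * P * S)ᴴ * (S * P * S)).trace := by
      rw [h1, Matrix.trace_mul_comm]
      congr 1
      rw [Matrix.conjTranspose_mul, Matrix.conjTranspose_mul, hSh, hPh]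
      noncomm_ring
    rw [h2]
    exact trace_cT_mul_self_re_nonneg _
  -- trace of ρ² in terms of eigenvalues
  classical
  obtain ⟨U, hUstar, hspec⟩ : ∃ U : Matrix (Fin n) (Fin n) ℂ,
      star U * U = 1 ∧ ρ = U * Matrix.diagonal ((↑) ∘ hρ.1.eigenvalues) * star U :=
    ⟨(IsHermitian.eigenvectorUnitary hρ.1 : Matrix (Fin n) (Fin n) ℂ),
      (Matrix.mem_unitaryGroup_iff').mp (IsHermitian.eigenvectorUnitary hρ.1).2,
      hρ.1.spectral_theorem⟩
  set D : Matrix (Fin n) (Fin n) ℂ := Matrix.diagonal ((↑) ∘ hρ.1.eigenvalues) with hD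
  have hsq : ρ * ρ = U * (D * D) * star U := by
    rw [hspec]
    calc U * D * star U * (U * D * star U) = U * (D * ((star U * U) * (D * star U))) := by
          noncomm_ring
      _ = U * (D * D) * star U := by rw [hUstar]; noncomm_ring
  have htr2 : (ρ * ρ).trace = ∑ i, ((hρ.1.eigenvalues i : ℂ) * (hρ.1.eigenvalues i : ℂ)) := by
    rw [hsq, Matrix.trace_mul_cycle, ← mul_assoc, hUstar, one_mul, hD,
      Matrix.diagonal_mul_diagonal, Matrix.trace_diagonal]
    simp
  have htr1 : (ρ.trace) = ∑ i, (hρ.1.eigenvalues i : ℂ) := by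
    conv_lhs => rw [hspec]
    rw [Matrix.trace_mul_cycle, hUstar, one_mul, hD, Matrix.trace_diagonal]
    simp
  have hsum1 : ∑ i, hρ.1.eigenvalues i = 1 := by
    have := hρtr
    rw [htr1] at this
    exact_mod_cast this
  have hnonneg : ∀ i, 0 ≤ hρ.1.eigenvalues i := hρ.eigenvalues_nonneg
  have hle1 : ∀ i, hρ.1.eigenvalues i ≤ 1 := by
    intro i
    rw [← hsum1]
    exact Finset.single_le_sum (fun j _ => hnonneg j) (Finset.mem_univ i)
  have htrsq_le : ((ρ * ρ).trace).re ≤ 1 := by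
    rw [htr2]
    rw [Complex.re_sum]
    calc ∑ i, ((hρ.1.eigenvalues i : ℂ) * (hρ.1.eigenvalues i : ℂ)).re
        = ∑ i, hρ.1.eigenvalues i * hρ.1.eigenvalues i := by
          refine Finset.sum_congr rfl fun i _ => ?_
          rw [← Complex.ofReal_mul, Complex.ofReal_re]
      _ ≤ ∑ i, hρ.1.eigenvalues i := by
          refine Finset.sum_le_sum fun i _ => ?_
          nlinarith [hnonneg i, hle1 i]
      _ = 1 := hsum1
  -- put it together
  unfold frobNormC
  refine Real.sqrt_le_sqrt ?_
  rw [key]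
  have : (2 * (ρ * ρ).trace - 2 * ((ρ * P) * (ρ * P)).trace).re
      = 2 * ((ρ * ρ).trace).re - 2 * (((ρ * P) * (ρ * P)).trace).re := by
    simp [Complex.sub_re, Complex.mul_re]
  rw [this]
  linarith
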